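/- Let ρ_1, …, ρ_L ≥ 0 with ρ_L > 0 and Σ_{ℓ=1}^L ℓ·ρ_ℓ = 1. Then every complex root λ of the polynomial λ^L − Σ_{j=0}^{L-1} (Σ_{ℓ=L-j}^L ρ_ℓ) λ^j satisfies |λ| ≤ 1, and λ = 1 is a simple root. -/

import Mathlib

open Finset

theorem stmt4 (L : ℕ) (hL : 0 < L) (ρ : Fin L → ℝ) (hρ : ∀ ℓ, 0 ≤ ρ ℓ)
    (hρL : 0 < ρ (Fin.last (L - 1) |>.cast (by omega)))
    (hsum : ∑ ℓ : Fin L, (((ℓ : ℕ) : ℝ) + 1) * ρ ℓ = 1) :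
    (∀ lam : ℂ,
        lam ^ L - (∑ j : Fin L,
          ((∑ ℓ ∈ Finset.univ.filter (fun ℓ : Fin L => L - (j : ℕ) ≤ (ℓ : ℕ) + 1), ρ ℓ : ℝ) : ℂ)
            * lam ^ (j : ℕ)) = 0 → ‖lam‖ ≤ 1) ∧
      (1 : ℂ) ^ L - (∑ j : Fin L,
          ((∑ ℓ ∈ Finset.univ.filter (fun ℓ : Fin L => L - (j : ℕ) ≤ (ℓ : ℕ) + 1), ρ ℓ : ℝ) : ℂ)
            * 1 ^ (j : ℕ)) = 0 ∧
      deriv (fun lam : ℂ => lam ^ L - (∑ j : Fin L,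
          ((∑ ℓ ∈ Finset.univ.filter (fun ℓ : Fin L => L - (j : ℕ) ≤ (ℓ : ℕ) + 1), ρ ℓ : ℝ) : ℂ)
            * lam ^ (j : ℕ))) 1 ≠ 0 := by
  -- notation for the coefficients
  set c : Fin L → ℝ := fun j =>
    ∑ ℓ ∈ Finset.univ.filter (fun ℓ : Fin L => L - (j : ℕ) ≤ (ℓ : ℕ) + 1), ρ ℓ with hcdef
  have hc0 : ∀ j, 0 ≤ c j := fun j => Finset.sum_nonneg fun ℓ _ => hρ ℓ
  have hcsum : ∑ j : Fin L, c j = 1 := by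
    rw [← hsum]
    simp only [hcdef, Finset.sum_filter]
    rw [Finset.sum_comm]
    refine Finset.sum_congr rfl fun ℓ _ => ?_
    rw [Fin.sum_univ_eq_sum_range (fun j => if L - j ≤ (ℓ:ℕ)+1 then ρ ℓ else 0)]
    rw [← Finset.sum_filter]
    have h1 : (Finset.range L).filter (fun j => L - j ≤ (ℓ:ℕ)+1) = Finset.Ico (L - ((ℓ:ℕ)+1)) L := by
      ext j; simp only [Finset.mem_filter, Finset.mem_range, Finset.mem_Ico]; omega
    have hl : (ℓ:ℕ) < L := ℓ.isLt
    have h2 : L - (L - ((ℓ:ℕ)+1)) = (ℓ:ℕ)+1 := by omega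
    rw [h1, Finset.sum_const, Nat.card_Ico, h2]
    push_cast
    ring
  refine ⟨?_, ?_, ?_⟩
  · -- all roots have modulus ≤ 1
    intro lam hlam
    by_contra hgt
    push_neg at hgt
    have heq : lam ^ L = ∑ j : Fin L, ((c j : ℝ) : ℂ) * lam ^ (j : ℕ) := by
      rw [← sub_eq_zero]; exact hlam
    have habs : ‖lam‖ ^ L ≤ ‖lam‖ ^ (L - 1) := by
      calc ‖lam‖ ^ L = ‖lam ^ L‖ := (norm_pow _ _).symm
        _ = ‖∑ j : Fin L, ((c j : ℝ) : ℂ) * lam ^ (j : ℕ)‖ := by rw [heq]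
        _ ≤ ∑ j : Fin L, ‖((c j : ℝ) : ℂ) * lam ^ (j : ℕ)‖ :=
            norm_sum_le _ _
        _ = ∑ j : Fin L, c j * ‖lam‖ ^ (j : ℕ) := by
            refine Finset.sum_congr rfl fun j _ => ?_
            rw [norm_mul, norm_pow, Complex.norm_real, Real.norm_of_nonneg (hc0 j)]
        _ ≤ ∑ j : Fin L, c j * ‖lam‖ ^ (L - 1) := by
            refine Finset.sum_le_sum fun j _ => ?_
            exact mul_le_mul_of_nonneg_left
              (pow_le_pow_right₀ hgt.le (by omega)) (hc0 j)
        _ = ‖lam‖ ^ (L - 1) := by rw [← Finset.sum_mul, hcsum, one_mul]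
    have hlt : ‖lam‖ ^ (L - 1) < ‖lam‖ ^ L :=
      pow_lt_pow_right₀ hgt (by omega)
    exact absurd habs (not_le.mpr hlt)
  · -- λ = 1 is a root
    simp only [one_pow, mul_one]
    rw [← Complex.ofReal_sum, sub_eq_zero]
    rw [hcsum]; norm_num
  · -- simple root
    have hD : HasDerivAt (fun lam : ℂ => lam ^ L - ∑ j : Fin L, ((c j : ℝ) : ℂ) * lam ^ (j : ℕ))
        ((L : ℂ) * 1 ^ (L - 1) - ∑ j : Fin L, ((c j : ℝ) : ℂ) * (((j : ℕ) : ℂ) * 1 ^ ((j : ℕ) - 1)))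
        1 := by
      exact (hasDerivAt_pow L 1).sub
        (HasDerivAt.fun_sum fun j _ => ((hasDerivAt_pow (j : ℕ) 1)).const_mul _)
    rw [hD.deriv]
    simp only [one_pow, mul_one]
    have key : (0 : ℝ) < (L : ℝ) - ∑ j : Fin L, c j * (j : ℕ) := by
      have hb : ∑ j : Fin L, c j * (j : ℕ) ≤ ∑ j : Fin L, c j * ((L : ℝ) - 1) := by
        refine Finset.sum_le_sum fun j _ => ?_
        refine mul_le_mul_of_nonneg_left ?_ (hc0 j)
        have : (j : ℕ) ≤ L - 1 := by omega
        have := (Nat.cast_le (α := ℝ)).mpr this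
        calc ((j : ℕ) : ℝ) ≤ ((L - 1 : ℕ) : ℝ) := this
          _ = (L : ℝ) - 1 := by push_cast [Nat.cast_sub hL]; ring
      rw [← Finset.sum_mul, hcsum, one_mul] at hb
      linarith
    have : ((L : ℂ) - ∑ j : Fin L, ((c j : ℝ) : ℂ) * ((j : ℕ) : ℂ)) =
        (((L : ℝ) - ∑ j : Fin L, c j * (j : ℕ) : ℝ) : ℂ) := by
      push_cast; ring
    rw [this]
    exact Complex.ofReal_ne_zero.mpr (ne_of_gt key)
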